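/- Strengthened bound for Claim 1.4(1): Let k(*) > 0 and suppose m(1) > k(*)! · m(0)^{k(*)+1}. Let A' ⊆ ℕ with |A'| ≥ m(1), and for each k < k(*) let h_k be a function from A' into ℕ with h_k(i) ≥ i for all i ∈ A'. Then there is A'' ⊆ A' with |A''| ≥ m(0) such that for each k < k(*): either for all i, j ∈ A'' with i < j one has h_k(i) ≥ j, or for all i, j ∈ A'' with i < j one has h_k(i) < j. -/

import Mathlib

def hgt (A : Finset ℕ) (H : ℕ → ℕ) (i : ℕ) : ℕ :=
  ((A.filter (fun j => j < i ∧ H j < i)).attach).sup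
    (fun j => hgt A H j.1 + 1)
termination_by i
decreasing_by
  have hj := j.2
  simp only [Finset.mem_filter] at hj
  exact hj.2.1

lemma hgt_lt {A : Finset ℕ} {H : ℕ → ℕ} {j i : ℕ}
    (hjA : j ∈ A) (hji : j < i) (hHji : H j < i) :
    hgt A H j < hgt A H i := by
  have hmem : j ∈ A.filter (fun j => j < i ∧ H j < i) := by
    simp [Finset.mem_filter, hjA, hji, hHji]
  have hle := Finset.le_sup (f := fun j : {x // x ∈ A.filter (fun j => j < i ∧ H j < i)} =>
    hgt A H j.1 + 1) (Finset.mem_attach _ ⟨j, hmem⟩)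
  conv_rhs => rw [hgt]
  simp only at hle
  omega

lemma hgt_pos_exists {A : Finset ℕ} {H : ℕ → ℕ} {i : ℕ}
    (hpos : 0 < hgt A H i) :
    ∃ j ∈ A, j < i ∧ H j < i ∧ hgt A H i = hgt A H j + 1 := by
  rw [hgt] at hpos
  have hne : (A.filter (fun j => j < i ∧ H j < i)).attach.Nonempty := by
    rcases (A.filter (fun j => j < i ∧ H j < i)).attach.eq_empty_or_nonempty with he | hne
    · rw [he] at hpos; simp at hpos
    · exact hne
  obtain ⟨b, -, hb⟩ := Finset.exists_mem_eq_sup _ hne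
    (fun j : {x // x ∈ A.filter (fun j => j < i ∧ H j < i)} => hgt A H j.1 + 1)
  have hbmem := b.2
  rw [Finset.mem_filter] at hbmem
  refine ⟨b.1, hbmem.1, hbmem.2.1, hbmem.2.2, ?_⟩
  conv_lhs => rw [hgt]
  exact hb

lemma chain_exists (A : Finset ℕ) (H : ℕ → ℕ) :
    ∀ d, ∀ i ∈ A, d ≤ hgt A H i →
    ∃ S : Finset ℕ, S ⊆ A ∧ S.card = d + 1 ∧ i ∈ S ∧ (∀ x ∈ S, x ≤ i) ∧
      ∀ x ∈ S, ∀ y ∈ S, x < y → H x < y := by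
  intro d
  induction d with
  | zero =>
    intro i hi _
    refine ⟨{i}, by simp [hi], by simp, by simp, by simp, ?_⟩
    intro x hx y hy hxy
    simp only [Finset.mem_singleton] at hx hy
    omega
  | succ d ih =>
    intro i hi hd
    have hpos : 0 < hgt A H i := lt_of_lt_of_le (Nat.succ_pos d) hd
    obtain ⟨j, hjA, hji, hHji, heq⟩ := hgt_pos_exists hpos
    have hdj : d ≤ hgt A H j := by omega
    obtain ⟨S, hSA, hScard, hjS, hSle, hSfar⟩ := ih j hjA hdj
    have hiS : i ∉ S := fun hmem => absurd (hSle i hmem) (by omega)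
    refine ⟨insert i S, Finset.insert_subset hi hSA, ?_, Finset.mem_insert_self i S, ?_, ?_⟩
    · rw [Finset.card_insert_of_notMem hiS, hScard]
    · intro x hx
      rcases Finset.mem_insert.mp hx with rfl | hxS
      · exact le_rfl
      · exact (hSle x hxS).trans hji.le
    · intro x hx y hy hxy
      rcases Finset.mem_insert.mp hy with rfl | hyS
      · have hxS : x ∈ S := by
          rcases Finset.mem_insert.mp hx with h1 | h1
          · omega
          · exact h1
        have hxj : x ≤ j := hSle x hxS
        rcases eq_or_lt_of_le hxj with rfl | hlt
        · exact hHji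
        · exact (hSfar x hxS j hjS hlt).trans hji
      · have hxS : x ∈ S := by
          rcases Finset.mem_insert.mp hx with h1 | h1
          · exfalso; have := hSle y hyS; omega
          · exact h1
        exact hSfar x hxS y hyS hxy

lemma main_aux (m0 : ℕ) : ∀ n (K A : Finset ℕ) (h : ℕ → ℕ → ℕ),
    K.card = n → (∀ k ∈ K, ∀ i ∈ A, i ≤ h k i) →
    n.factorial * m0 ^ (n + 1) < A.card →
    ∃ A'' : Finset ℕ, A'' ⊆ A ∧ m0 ≤ A''.card ∧
      ∀ k ∈ K, (∀ i ∈ A'', ∀ j ∈ A'', i < j → j ≤ h k i) ∨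
        (∀ i ∈ A'', ∀ j ∈ A'', i < j → h k i < j) := by
  intro n
  induction n with
  | zero =>
    intro K A h hK _ hcard
    refine ⟨A, subset_rfl, ?_, ?_⟩
    · simp [Nat.factorial] at hcard; omega
    · intro k hk
      rw [Finset.card_eq_zero] at hK
      simp [hK] at hk
  | succ n ih =>
    intro K A h hKcard hmono hcard
    rcases Nat.eq_zero_or_pos m0 with hm0 | hm0
    · exact ⟨∅, Finset.empty_subset _, by simp [hm0], fun k _ => Or.inl (by simp)⟩
    have hKne : K.Nonempty := by rw [← Finset.card_pos, hKcard]; omega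
    set H : ℕ → ℕ := fun i => K.inf' hKne (fun k => h k i) with hH
    set N' := n.factorial * m0 ^ (n + 1) with hN'
    set B := (n + 1) * N' with hB
    have hN'pos : 0 < N' := by
      rw [hN']
      exact Nat.mul_pos (Nat.factorial_pos n) (Nat.pow_pos hm0)
    have hBpos : 0 < B := by rw [hB]; positivity
    have hBm : B * m0 < A.card := by
      have hfe : (n + 1).factorial * m0 ^ (n + 1 + 1) = B * m0 := by
        rw [hB, hN', Nat.factorial_succ]; ring
      omega
    have hcolor : ∀ i, ∃ k ∈ K, H i = h k i := fun i =>
      Finset.exists_mem_eq_inf' hKne (fun k => h k i)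
    choose c hcK hcH using hcolor
    by_cases hcase : ∃ i ∈ A, B ≤ hgt A H i
    · obtain ⟨i, hiA, hBle⟩ := hcase
      obtain ⟨S, hSA, hScard, -, -, hSfar⟩ := chain_exists A H B i hiA hBle
      have hfib : S.card = ∑ k ∈ K, (S.filter (fun x => c x = k)).card :=
        Finset.card_eq_sum_card_fiberwise (fun x _ => hcK x)
      have hex : ∃ k ∈ K, N' < (S.filter (fun x => c x = k)).card := by
        by_contra hno
        push_neg at hno
        have hsum : ∑ k ∈ K, (S.filter (fun x => c x = k)).card ≤ ∑ _k ∈ K, N' :=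
          Finset.sum_le_sum (fun k hk => hno k hk)
        rw [Finset.sum_const, smul_eq_mul, hKcard] at hsum
        omega
      obtain ⟨k, hkK, hkbig⟩ := hex
      set T := S.filter (fun x => c x = k) with hT
      have hTA : T ⊆ A := (Finset.filter_subset _ _).trans hSA
      obtain ⟨A'', hsub, hcard'', hhom⟩ := ih (K.erase k) T h
        (by rw [Finset.card_erase_of_mem hkK, hKcard]; omega)
        (fun k' hk' i hi => hmono k' (Finset.mem_of_mem_erase hk') i (hTA hi))
        hkbig
      refine ⟨A'', hsub.trans hTA, hcard'', ?_⟩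
      intro k' hk'
      by_cases hkk : k' = k
      · subst hkk
        right
        intro x hx y hy hxy
        have hxT := hsub hx
        have hyT := hsub hy
        rw [hT, Finset.mem_filter] at hxT hyT
        have hfar : H x < y := hSfar x hxT.1 y hyT.1 hxy
        have hHx : H x = h k' x := by rw [← hxT.2]; exact hcH x
        omega
      · exact hhom k' (Finset.mem_erase.mpr ⟨hkk, hk'⟩)
    · push_neg at hcase
      have hfib : A.card = ∑ v ∈ Finset.range B, (A.filter (fun x => hgt A H x = v)).card :=
        Finset.card_eq_sum_card_fiberwise (fun x hx => Finset.mem_range.mpr (hcase x hx))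
      have hex : ∃ v ∈ Finset.range B, m0 ≤ (A.filter (fun x => hgt A H x = v)).card := by
        by_contra hno
        push_neg at hno
        have hsum : ∑ v ∈ Finset.range B, (A.filter (fun x => hgt A H x = v)).card
            ≤ ∑ _v ∈ Finset.range B, (m0 - 1) :=
          Finset.sum_le_sum (fun v hv => by have := hno v hv; omega)
        rw [Finset.sum_const, Finset.card_range, smul_eq_mul] at hsum
        have hmul : B * (m0 - 1) + B = B * m0 := by
          have : m0 - 1 + 1 = m0 := by omega
          calc B * (m0 - 1) + B = B * (m0 - 1 + 1) := by ring
            _ = B * m0 := by rw [this]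
        omega
      obtain ⟨v, -, hvcard⟩ := hex
      refine ⟨A.filter (fun x => hgt A H x = v), Finset.filter_subset _ _, hvcard, ?_⟩
      intro k hk
      left
      intro x hx y hy hxy
      rw [Finset.mem_filter] at hx hy
      have hyH : y ≤ H x := by
        by_contra hlt
        push_neg at hlt
        have := hgt_lt hx.1 hxy hlt
        omega
      have hHle : H x ≤ h k x := Finset.inf'_le _ hk
      omega

/-- Strengthened bound for Claim 1.4(1): the same conclusion already under the
weaker hypothesis `m₁ > k*! · m₀^{k*+1}`. -/
theorem claim_1_4_1_strengthened (kstar m0 m1 : ℕ) (hk : 0 < kstar)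
    (hm : Nat.factorial kstar * m0 ^ (kstar + 1) < m1)
    (A' : Finset ℕ) (hA : m1 ≤ A'.card)
    (h : ℕ → ℕ → ℕ) (hh : ∀ k < kstar, ∀ i ∈ A', i ≤ h k i) :
    ∃ A'' : Finset ℕ, A'' ⊆ A' ∧ m0 ≤ A''.card ∧
      ∀ k < kstar,
        (∀ i ∈ A'', ∀ j ∈ A'', i < j → j ≤ h k i) ∨
        (∀ i ∈ A'', ∀ j ∈ A'', i < j → h k i < j) := by
  obtain ⟨A'', hsub, hcard, hhom⟩ := main_aux m0 kstar (Finset.range kstar) A' h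
    (Finset.card_range kstar)
    (fun k hk i hi => hh k (Finset.mem_range.mp hk) i hi)
    (by omega)
  exact ⟨A'', hsub, hcard, fun k hk => hhom k (Finset.mem_range.mpr hk)⟩
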